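/- arXiv:1910.09816 — 2 statements merged into one kernel-verified Lean document; each statement's English description precedes it below -/
import Mathlib

section
/- Let (A,φ) and (B,ψ) be PCAs over Set and let f: (A,φ) → (B,ψ) be an applicative morphism. Then the induced functor Asm(f): Asm(A,φ) → Asm(B,ψ) has a right adjoint if and only if f is computationally dense. -/
open CategoryTheory

namespace PcaPaper

/-- A partial binary application on `A`. -/
abbrev PApp (A : Type) := A → A → Option A

variable {A B C : Type}

/-- Definedness of the application of inhabited subsets. -/
def SubDef (app : PApp A) (U V : Set A) : Prop :=
  ∀ a ∈ U, ∀ b ∈ V, (app a b).isSome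

/-- Application of subsets. -/
def SubApp (app : PApp A) (U V : Set A) : Set A :=
  {c | ∃ a ∈ U, ∃ b ∈ V, app a b = some c}

/-- Terms with `n` variables, built from variables by application. -/
inductive Term (n : ℕ) : Type
  | var : Fin n → Term n
  | op : Term n → Term n → Term n

/-- Evaluation of a term at a vector of elements, as a partial function. -/
def Term.eval (app : PApp A) : {n : ℕ} → Term n → (Fin n → A) → Option A
  | _, .var i, ρ => some (ρ i)
  | _, .op s t, ρ => (Term.eval app s ρ).bind fun x => (Term.eval app t ρ).bind fun y => app x y

/-- Evaluation of a term at a vector of subsets. -/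
def Term.subEval (app : PApp A) : {n : ℕ} → Term n → (Fin n → Set A) → Set A
  | _, .var i, ρ => ρ i
  | _, .op s t, ρ => SubApp app (Term.subEval app s ρ) (Term.subEval app t ρ)

/-- Definedness of the evaluation of a term at a vector of subsets. -/
def Term.subDef (app : PApp A) : {n : ℕ} → Term n → (Fin n → Set A) → Prop
  | _, .var _, _ => True
  | _, .op s t, ρ => Term.subDef app s ρ ∧ Term.subDef app t ρ ∧
      SubDef app (Term.subEval app s ρ) (Term.subEval app t ρ)

/-- `r · a 0 · … · a (k-1)`, associated to the left. -/
def appVec (app : PApp A) (r : A) : (k : ℕ) → (Fin k → A) → Option A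
  | 0, _ => some r
  | k + 1, a => (appVec app r k fun i => a i.castSucc).bind fun s => app s (a (Fin.last k))

/-- `U` realizes `λ x₀ … xₙ. t`. -/
def Realizes (app : PApp A) (U : Set A) {n : ℕ} (t : Term (n + 1)) : Prop :=
  ∀ r ∈ U, ∀ a : Fin (n + 1) → A,
    (appVec app r n fun i => a i.castSucc).isSome ∧
    ∀ b, Term.eval app t a = some b → appVec app r (n + 1) a = some b

/-- A filter of inhabited subsets on a partial applicative structure. -/
structure IsPcaFilter (app : PApp A) (φ : Set (Set A)) : Prop where
  nonempty : ∀ U ∈ φ, U.Nonempty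
  upward : ∀ U ∈ φ, ∀ V : Set A, U ⊆ V → V ∈ φ
  appClosed : ∀ U ∈ φ, ∀ V ∈ φ, SubDef app U V → SubApp app U V ∈ φ

/-- Combinatorial completeness of a set of subsets. -/
def CombComplete (app : PApp A) (G : Set (Set A)) : Prop :=
  ∀ (n : ℕ) (t : Term (n + 1)), ∃ U ∈ G, Realizes app U t

/-- The least filter containing `G`. -/
def genFilter (app : PApp A) (G : Set (Set A)) : Set (Set A) :=
  ⋂₀ {ψ | IsPcaFilter app ψ ∧ G ⊆ ψ}

/-- A (relative) PCA over the base category `Set`: a nonempty set with a partial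
binary application and a combinatorially complete filter of inhabited subsets. -/
structure PCA (A : Type) where
  app : PApp A
  nonemptyCarrier : Nonempty A
  filt : Set (Set A)
  isFilter : IsPcaFilter app filt
  complete : CombComplete app filt

/- ### Helper lemmas -/

lemma isSome_bind_left {α β : Type} {o : Option α} {f : α → Option β}
    (h : (o.bind f).isSome) : o.isSome := by
  cases o <;> simp_all

lemma appVec_two_pre (app : PApp A) (r u v x : A) :
    (appVec app r 2 fun i => (![u, v, x] : Fin 3 → A) i.castSucc)
      = (app r u).bind fun s => app s v := rfl

lemma appVec_three_cons (app : PApp A) (r u v x : A) :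
    appVec app r (2 + 1) ![u, v, x]
      = ((app r u).bind fun s => app s v).bind fun s => app s x := rfl

lemma eval_comp_term (app : PApp A) (u v x : A) :
    Term.eval app (Term.op (.var 1) (.op (.var 0) (.var 2))) ![u, v, x]
      = (app u x).bind fun y => app v y := by
  simp [Term.eval]

lemma eval_app2_term (app : PApp A) (u v x : A) :
    Term.eval app (Term.op (.op (.var 0) (.var 1)) (.var 2)) ![u, v, x]
      = (app u v).bind fun d => app d x := by
  simp [Term.eval]

lemma filt_nonempty (P : PCA A) : ∃ U, U ∈ P.filt := by
  obtain ⟨U, hU, -⟩ := P.complete 0 (.var 0)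
  exact ⟨U, hU⟩

lemma univ_mem_filt (P : PCA A) : (Set.univ : Set A) ∈ P.filt := by
  obtain ⟨U, hU⟩ := filt_nonempty P
  exact P.isFilter.upward U hU _ (Set.subset_univ U)

lemma exists_ireal (P : PCA A) :
    ∃ U ∈ P.filt, ∀ r ∈ U, ∀ a : A, P.app r a = some a := by
  obtain ⟨U, hU, hreal⟩ := P.complete 0 (.var 0)
  refine ⟨U, hU, fun r hr a => ?_⟩
  have h := (hreal r hr fun _ => a).2 a (by simp [Term.eval])
  simpa [appVec] using h

lemma realizes3_chain (P : PCA A) {T : Set A} {t : Term (2 + 1)}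
    (hreal : Realizes P.app T t) {r : A} (hr : r ∈ T) (u v : A) :
    ∃ s w, P.app r u = some s ∧ P.app s v = some w := by
  have h1 : ((P.app r u).bind fun s => P.app s v).isSome := by
    have h := (hreal r hr ![u, v, v]).1
    rwa [appVec_two_pre] at h
  cases hru : P.app r u with
  | none => rw [hru] at h1; simp at h1
  | some s =>
    rw [hru] at h1
    simp only [Option.bind_some] at h1
    obtain ⟨w, hw⟩ := Option.isSome_iff_exists.mp h1
    exact ⟨s, w, rfl, hw⟩

lemma exists_tracker3 (P : PCA A) (t : Term (2 + 1)) {U V : Set A}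
    (hU : U ∈ P.filt) (hV : V ∈ P.filt) :
    ∃ W ∈ P.filt, ∀ w ∈ W, ∃ u ∈ U, ∃ v ∈ V,
      ∀ x c : A, Term.eval P.app t ![u, v, x] = some c → P.app w x = some c := by
  obtain ⟨T, hT, hreal⟩ := P.complete 2 t
  have hdef1 : SubDef P.app T U := by
    intro r hr u _
    obtain ⟨s, w, hs, -⟩ := realizes3_chain P hreal hr u u
    simp [hs]
  have hTU := P.isFilter.appClosed T hT U hU hdef1
  have hdef2 : SubDef P.app (SubApp P.app T U) V := by
    rintro s ⟨r, hr, u, hu, hru⟩ v _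
    obtain ⟨s', w, hs', hw⟩ := realizes3_chain P hreal hr u v
    rw [hru] at hs'
    injection hs' with h
    subst h
    simp [hw]
  refine ⟨SubApp P.app (SubApp P.app T U) V,
    P.isFilter.appClosed _ hTU V hV hdef2, ?_⟩
  rintro w ⟨s, ⟨r, hr, u, hu, hru⟩, v, hv, hsv⟩
  refine ⟨u, hu, v, hv, fun x c hc => ?_⟩
  have h2 : appVec P.app r (2 + 1) ![u, v, x] = some c := (hreal r hr ![u, v, x]).2 c hc
  rw [appVec_three_cons, hru] at h2
  simp only [Option.bind_some] at h2
  rw [hsv] at h2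
  simpa using h2

/- ### Assemblies -/

/-- An assembly over a PCA `(A, φ)`. -/
structure Asm {A : Type} (P : PCA A) : Type 1 where
  carrier : Type
  E : carrier → A → Prop
  total : ∀ x, ∃ a, E x a

/-- `U` tracks the function `f` between (the carriers of) two assemblies. -/
def Tracks (P : PCA A) {X Y : Asm P} (U : Set A) (f : X.carrier → Y.carrier) : Prop :=
  ∀ x a r, X.E x a → r ∈ U → ∃ b, P.app r a = some b ∧ Y.E (f x) b

/-- The category of assemblies over a PCA. -/
instance asmCategory (P : PCA A) : Category (Asm P) where
  Hom X Y := {f : X.carrier → Y.carrier // ∃ U ∈ P.filt, Tracks P U f}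
  id X := ⟨fun x => x, by
    obtain ⟨U, hU, hI⟩ := exists_ireal P
    exact ⟨U, hU, fun x a r hx hr => ⟨a, hI r hr a, hx⟩⟩⟩
  comp {X Y Z} f g := ⟨fun x => g.1 (f.1 x), by
    obtain ⟨U, hU, hf⟩ := f.2
    obtain ⟨V, hV, hg⟩ := g.2
    obtain ⟨W, hW, hkey⟩ := exists_tracker3 P
      (Term.op (.var 1) (.op (.var 0) (.var 2))) hU hV
    refine ⟨W, hW, fun x a w hx hw => ?_⟩
    obtain ⟨u, hu, v, hv, key⟩ := hkey w hw
    obtain ⟨b, hb, hYb⟩ := hf x a u hx hu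
    obtain ⟨c, hc, hZc⟩ := hg (f.1 x) b v hYb hv
    refine ⟨c, key a c ?_, hZc⟩
    rw [eval_comp_term, hb]
    simpa using hc⟩
  id_comp f := Subtype.ext rfl
  comp_id f := Subtype.ext rfl
  assoc f g h := Subtype.ext rfl

/-- The global-sections-like functor `Γ : Asm(A,φ) ⥤ Set`. -/
def Gam (P : PCA A) : Asm P ⥤ Type where
  obj X := X.carrier
  map f := TypeCat.ofHom f.1
  map_id _ := rfl
  map_comp _ _ := rfl

/-- The constant-object assembly `∇ Y`. -/
def nablaObj (P : PCA A) (Y : Type) : Asm P where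
  carrier := Y
  E := fun _ _ => True
  total := fun _ => P.nonemptyCarrier.elim fun a => ⟨a, trivial⟩

/-- The functor `∇ : Set ⥤ Asm(A,φ)`. -/
def Nab (P : PCA A) : Type ⥤ Asm P where
  obj Y := nablaObj P Y
  map {Y Z} f := ⟨f, by
    obtain ⟨U, hU, hI⟩ := exists_ireal P
    exact ⟨U, hU, fun y a r _ hr => ⟨a, hI r hr a, trivial⟩⟩⟩
  map_id _ := Subtype.ext rfl
  map_comp _ _ := Subtype.ext rfl

/- ### Applicative morphisms -/

/-- The image of a subset under a relation. -/
def relImage (f : A → B → Prop) (V : Set A) : Set B :=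
  {b | ∃ a ∈ V, f a b}

/-- `U` tracks the relation `f` as an applicative (pre)morphism. -/
def Tracks₂ (appA : PApp A) (appB : PApp B) (U : Set B) (f : A → B → Prop) : Prop :=
  ∀ a a' c, appA a a' = some c → ∀ b b', f a b → f a' b' → ∀ r ∈ U,
    ∃ d e, appB r b = some d ∧ appB d b' = some e ∧ f c e

/-- `f ⊆ A × B` is an applicative morphism `(A,φ) → (B,ψ)`. -/
structure IsAppMor (appA : PApp A) (φ : Set (Set A)) (appB : PApp B) (ψ : Set (Set B))
    (f : A → B → Prop) : Prop where
  total : ∀ a, ∃ b, f a b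
  tracked : ∃ U ∈ ψ, Tracks₂ appA appB U f
  image : ∀ V ∈ φ, relImage f V ∈ ψ

/-- The preorder `f ≤ f'` on relations `A × B`, relative to `(B,ψ)`. -/
def RelLe (appB : PApp B) (ψ : Set (Set B)) (f f' : A → B → Prop) : Prop :=
  ∃ U ∈ ψ, ∀ a b, f a b → ∀ r ∈ U, ∃ c, appB r b = some c ∧ f' a c

/-- Relational composition: `(RelComp g f) a c ↔ ∃ b, f a b ∧ g b c`. -/
def RelComp (g : B → C → Prop) (f : A → B → Prop) : A → C → Prop :=
  fun a c => ∃ b, f a b ∧ g b c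

/-- The diagonal (identity) relation `δ_A`. -/
def relId (A : Type) : A → A → Prop := fun a b => a = b

/- ### The functor Asm(f) induced by an applicative morphism -/

/-- The action of an applicative morphism on an assembly. -/
def asmObj (P : PCA A) (Q : PCA B) (f : A → B → Prop) (htot : ∀ a, ∃ b, f a b)
    (X : Asm P) : Asm Q where
  carrier := X.carrier
  E := fun x b => ∃ a, X.E x a ∧ f a b
  total := fun x => by
    obtain ⟨a, ha⟩ := X.total x
    obtain ⟨b, hb⟩ := htot a
    exact ⟨b, a, ha, hb⟩

lemma tracks_asmMap {P : PCA A} {Q : PCA B} {f : A → B → Prop}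
    (hf : IsAppMor P.app P.filt Q.app Q.filt f) {X Y : Asm P}
    (g : X.carrier → Y.carrier) (hg : ∃ U ∈ P.filt, Tracks P U g) :
    ∃ W ∈ Q.filt,
      Tracks Q (X := asmObj P Q f hf.total X) (Y := asmObj P Q f hf.total Y) W g := by
  obtain ⟨U, hU, hgU⟩ := hg
  obtain ⟨T, hT, hfT⟩ := hf.tracked
  have hfU : relImage f U ∈ Q.filt := hf.image U hU
  obtain ⟨W, hW, hkey⟩ := exists_tracker3 Q
    (Term.op (.op (.var 0) (.var 1)) (.var 2)) hT hfU
  refine ⟨W, hW, ?_⟩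
  rintro x b w ⟨a, hxa, hab⟩ hw
  obtain ⟨v, hv, y, hy, key⟩ := hkey w hw
  obtain ⟨u, hu, huy⟩ := hy
  obtain ⟨a', ha', hEa'⟩ := hgU x a u hxa hu
  obtain ⟨d, e, hd, he, hfe⟩ := hfT u a a' ha' y b huy hab v hv
  refine ⟨e, key b e ?_, a', hEa', hfe⟩
  rw [eval_app2_term, hd]
  simpa using he

/-- The functor `Asm(f) : Asm(A,φ) ⥤ Asm(B,ψ)` induced by an applicative morphism. -/
def asmFunctor {P : PCA A} {Q : PCA B} {f : A → B → Prop}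
    (hf : IsAppMor P.app P.filt Q.app Q.filt f) : Asm P ⥤ Asm Q where
  obj X := asmObj P Q f hf.total X
  map {X Y} g := ⟨g.1, tracks_asmMap hf g.1 g.2⟩
  map_id _ := Subtype.ext rfl
  map_comp _ _ := Subtype.ext rfl
/- ### Products of PASs -/

/-- Coordinatewise partial application on `A × B`. -/
def prodApp (appA : PApp A) (appB : PApp B) : PApp (A × B) := fun p q =>
  (appA p.1 q.1).bind fun x => (appB p.2 q.2).bind fun y => some (x, y)

/-- The set `φ × ψ` of rectangles `U ×ˢ V` with `U ∈ φ` and `V ∈ ψ`. -/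
def prodFiltSet (φ : Set (Set A)) (ψ : Set (Set B)) : Set (Set (A × B)) :=
  {W | ∃ U ∈ φ, ∃ V ∈ ψ, W = U ×ˢ V}

/-- The filter `⟨φ × ψ⟩` of the pseudocoproduct of two PCAs. -/
def prodFilt (P : PCA A) (Q : PCA B) : Set (Set (A × B)) :=
  genFilter (prodApp P.app Q.app) (prodFiltSet P.filt Q.filt)

/- ### Quasi-surjectivity and computational density -/

/-- A quasi-surjective applicative morphism. -/
def QuasiSurjective (P : PCA A) (Q : PCA B) (f : A → B → Prop) : Prop :=
  ∃ N ∈ Q.filt, ∀ U ∈ Q.filt, ∃ V ∈ P.filt,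
    ∀ n ∈ N, ∀ b ∈ relImage f V, ∃ c, Q.app n b = some c ∧ c ∈ U

/-- A computationally dense applicative morphism. -/
def CompDense (P : PCA A) (Q : PCA B) (f : A → B → Prop) : Prop :=
  ∃ M ∈ Q.filt, ∀ U ∈ Q.filt, ∃ V ∈ P.filt,
    (∀ r ∈ V, ∀ a : A, (P.app r a).isSome) ∧
    (∀ r ∈ V, ∀ a a', P.app r a = some a' →
      (∀ u ∈ U, ∀ b, f a b → (Q.app u b).isSome) →
      ∀ m ∈ M, ∀ b', f a' b' →
        ∃ c, Q.app m b' = some c ∧ ∃ u ∈ U, ∃ b'', f a b'' ∧ Q.app u b'' = some c)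

/- ### Slicing: fiberwise filters over an assembly -/

/-- Fiberwise definedness of the application of two subsets of `I × A`. -/
def fibSubDef (app : PApp A) {I : Type} (U V : Set (I × A)) : Prop :=
  ∀ i r s, (i, r) ∈ U → (i, s) ∈ V → (app r s).isSome

/-- Fiberwise application of two subsets of `I × A`. -/
def fibSubApp (app : PApp A) {I : Type} (U V : Set (I × A)) : Set (I × A) :=
  {p | ∃ r s, (p.1, r) ∈ U ∧ (p.1, s) ∈ V ∧ app r s = some p.2}

/-- A fiberwise filter over `I`. -/
structure IsFibFilter (app : PApp A) (I : Type) (Ψ : Set (Set (I × A))) : Prop where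
  inhab : ∀ U ∈ Ψ, ∀ i : I, ∃ a, (i, a) ∈ U
  upward : ∀ U ∈ Ψ, ∀ V : Set (I × A), U ⊆ V → V ∈ Ψ
  appClosed : ∀ U ∈ Ψ, ∀ V ∈ Ψ, fibSubDef app U V → fibSubApp app U V ∈ Ψ

/-- The filter `φ_I` of the slice PCA over an assembly `I`: the least fiberwise filter
containing `E_I` and all sets `|I| × V` for `V ∈ φ`. -/
def sliceFilt (P : PCA A) (I : Asm P) : Set (Set (I.carrier × A)) :=
  ⋂₀ {Ψ | IsFibFilter P.app I.carrier Ψ ∧ {p : I.carrier × A | I.E p.1 p.2} ∈ Ψ ∧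
      ∀ V ∈ P.filt, {p : I.carrier × A | p.2 ∈ V} ∈ Ψ}

lemma sliceFilt_upward {P : PCA A} {I : Asm P} {U V : Set (I.carrier × A)}
    (hU : U ∈ sliceFilt P I) (hUV : U ⊆ V) : V ∈ sliceFilt P I := by
  rw [sliceFilt, Set.mem_sInter] at hU ⊢
  intro Ψ hΨ
  exact hΨ.1.upward U (hU Ψ hΨ) V hUV

lemma sliceFilt_appClosed {P : PCA A} {I : Asm P} {U V : Set (I.carrier × A)}
    (hU : U ∈ sliceFilt P I) (hV : V ∈ sliceFilt P I) (hdef : fibSubDef P.app U V) :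
    fibSubApp P.app U V ∈ sliceFilt P I := by
  rw [sliceFilt, Set.mem_sInter] at hU hV ⊢
  intro Ψ hΨ
  exact hΨ.1.appClosed U (hU Ψ hΨ) V (hV Ψ hΨ) hdef

lemma base_mem_sliceFilt {P : PCA A} {I : Asm P} {V : Set A} (hV : V ∈ P.filt) :
    {p : I.carrier × A | p.2 ∈ V} ∈ sliceFilt P I := by
  rw [sliceFilt, Set.mem_sInter]
  intro Ψ hΨ
  exact hΨ.2.2 V hV

lemma EI_mem_sliceFilt (P : PCA A) (I : Asm P) :
    {p : I.carrier × A | I.E p.1 p.2} ∈ sliceFilt P I := by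
  rw [sliceFilt, Set.mem_sInter]
  intro Ψ hΨ
  exact hΨ.2.1

lemma exists_fib_tracker3 (P : PCA A) (I : Asm P) (t : Term (2 + 1))
    {U V : Set (I.carrier × A)} (hU : U ∈ sliceFilt P I) (hV : V ∈ sliceFilt P I) :
    ∃ W ∈ sliceFilt P I, ∀ i w, (i, w) ∈ W → ∃ u v, (i, u) ∈ U ∧ (i, v) ∈ V ∧
      ∀ x c : A, Term.eval P.app t ![u, v, x] = some c → P.app w x = some c := by
  obtain ⟨T, hT, hreal⟩ := P.complete 2 t
  have hT' : {p : I.carrier × A | p.2 ∈ T} ∈ sliceFilt P I := base_mem_sliceFilt hT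
  have hdef1 : fibSubDef P.app {p : I.carrier × A | p.2 ∈ T} U := by
    intro i r s hr _
    obtain ⟨s', w', h1, -⟩ := realizes3_chain P hreal hr s s
    simp [h1]
  have h1mem := sliceFilt_appClosed hT' hU hdef1
  have hdef2 : fibSubDef P.app (fibSubApp P.app {p : I.carrier × A | p.2 ∈ T} U) V := by
    rintro i s v ⟨r, u, hr, hu, hru⟩ _
    obtain ⟨s', w', hs', hw'⟩ := realizes3_chain P hreal hr u v
    rw [hru] at hs'
    injection hs' with h
    subst h
    simp [hw']
  refine ⟨_, sliceFilt_appClosed h1mem hV hdef2, ?_⟩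
  rintro i w ⟨s, v, ⟨r, u, hr, hu, hru⟩, hv, hsv⟩
  refine ⟨u, v, hu, hv, fun x c hc => ?_⟩
  have h2 : appVec P.app r (2 + 1) ![u, v, x] = some c := (hreal r hr ![u, v, x]).2 c hc
  rw [appVec_three_cons, hru] at h2
  simp only [Option.bind_some] at h2
  rw [hsv] at h2
  simpa using h2

/- ### The category of assemblies over the slice PCA `(A,φ)/I` -/

/-- Assemblies over the slice PCA `(A,φ)/I`. -/
structure SliceAsm (P : PCA A) (I : Asm P) : Type 1 where
  carrier : Type
  k : carrier → I.carrier
  E : carrier → A → Prop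
  total : ∀ x, ∃ a, E x a

/-- Fiberwise tracking for morphisms of assemblies over `(A,φ)/I`. -/
def SliceTracks (P : PCA A) (I : Asm P) {X Y : SliceAsm P I} (U : Set (I.carrier × A))
    (f : X.carrier → Y.carrier) : Prop :=
  ∀ x a r, X.E x a → (X.k x, r) ∈ U → ∃ b, P.app r a = some b ∧ Y.E (f x) b

instance sliceAsmCategory (P : PCA A) (I : Asm P) : Category (SliceAsm P I) where
  Hom X Y := {f : X.carrier → Y.carrier //
    (∀ x, Y.k (f x) = X.k x) ∧ ∃ U ∈ sliceFilt P I, SliceTracks P I U f}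
  id X := ⟨fun x => x, fun _ => rfl, by
    obtain ⟨U, hU, hI⟩ := exists_ireal P
    exact ⟨{p | p.2 ∈ U}, base_mem_sliceFilt hU,
      fun x a r hx hr => ⟨a, hI r hr a, hx⟩⟩⟩
  comp {X Y Z} f g := ⟨fun x => g.1 (f.1 x), fun x => (g.2.1 (f.1 x)).trans (f.2.1 x), by
    obtain ⟨U, hU, hf⟩ := f.2.2
    obtain ⟨V, hV, hg⟩ := g.2.2
    obtain ⟨W, hW, hkey⟩ := exists_fib_tracker3 P I
      (Term.op (.var 1) (.op (.var 0) (.var 2))) hU hV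
    refine ⟨W, hW, fun x a w hx hw => ?_⟩
    obtain ⟨u, v, hu, hv, key⟩ := hkey (X.k x) w hw
    obtain ⟨b, hb, hYb⟩ := hf x a u hx hu
    have hv' : (Y.k (f.1 x), v) ∈ V := by rw [f.2.1 x]; exact hv
    obtain ⟨c, hc, hZc⟩ := hg (f.1 x) b v hYb hv'
    refine ⟨c, key a c ?_, hZc⟩
    rw [eval_comp_term, hb]
    simpa using hc⟩
  id_comp f := Subtype.ext rfl
  comp_id f := Subtype.ext rfl
  assoc f g h := Subtype.ext rfl

/- ### Families of assemblies (products of PCAs) -/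

/-- The category of families of assemblies over a family of PCAs, with uniformly
tracked families of morphisms; this is the category of assemblies over the product
PCA of the family, taken over the product of the base categories. -/
structure FamAsm {I : Type} {A : I → Type} (P : ∀ i, PCA (A i)) : Type 1 where
  obj : ∀ i, Asm (P i)

instance famAsmCategory {I : Type} {A : I → Type} (P : ∀ i, PCA (A i)) :
    Category (FamAsm P) where
  Hom X Y := {f : ∀ i, (X.obj i).carrier → (Y.obj i).carrier //
    ∃ U : ∀ i, Set (A i), (∀ i, U i ∈ (P i).filt) ∧ ∀ i, Tracks (P i) (U i) (f i)}
  id X := ⟨fun i x => x, by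
    choose U hU using fun i => exists_ireal (P i)
    exact ⟨U, fun i => (hU i).1, fun i x a r hx hr => ⟨a, (hU i).2 r hr a, hx⟩⟩⟩
  comp {X Y Z} f g := ⟨fun i x => g.1 i (f.1 i x), by
    obtain ⟨U, hU, hf⟩ := f.2
    obtain ⟨V, hV, hg⟩ := g.2
    choose W hW using fun i => exists_tracker3 (P i)
      (Term.op (.var 1) (.op (.var 0) (.var 2))) (hU i) (hV i)
    refine ⟨W, fun i => (hW i).1, fun i x a w hx hw => ?_⟩
    obtain ⟨u, hu, v, hv, key⟩ := (hW i).2 w hw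
    obtain ⟨b, hb, hYb⟩ := hf i x a u hx hu
    obtain ⟨c, hc, hZc⟩ := hg i (f.1 i x) b v hYb hv
    refine ⟨c, key a c ?_, hZc⟩
    rw [eval_comp_term, hb]
    simpa using hc⟩
  id_comp f := Subtype.ext rfl
  comp_id f := Subtype.ext rfl
  assoc f g h := Subtype.ext rfl
/- ### Auxiliary material for Statement 18 -/

section Stmt18

variable {A B : Type}

/- appVec computation lemmas -/

lemma appVec_one_pre2 (app : PApp A) (r u v : A) :
    (appVec app r 1 fun i => (![u, v] : Fin 2 → A) i.castSucc) = app r u := rfl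

lemma appVec_two_lit (app : PApp A) (r u v : A) :
    appVec app r 2 ![u, v] = (app r u).bind fun s => app s v := rfl

lemma appVec_three_pre (app : PApp A) (r u v w x : A) :
    (appVec app r 3 fun i => (![u, v, w, x] : Fin 4 → A) i.castSucc)
      = ((app r u).bind fun s => app s v).bind fun s => app s w := rfl

lemma appVec_four_cons (app : PApp A) (r u v w x : A) :
    appVec app r 4 ![u, v, w, x]
      = ((((app r u).bind fun s => app s v).bind fun s => app s w).bind
          fun s => app s x) := rfl

/- Term evaluation lemmas -/

lemma eval_tS3 (app : PApp A) (u m b : A) :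
    Term.eval app (Term.op (.var 0) (Term.op (.var 1) (.var 2)) : Term 3) ![u, m, b]
      = (app m b).bind fun y => app u y := by
  simp [Term.eval]

lemma eval_tR4 (app : PApp A) (m t w b : A) :
    Term.eval app
      (Term.op (.var 0) (Term.op (Term.op (.var 1) (.var 2)) (.var 3)) : Term 4)
      ![m, t, w, b]
      = ((app t w).bind fun d => app d b).bind fun e => app m e := by
  simp [Term.eval]

lemma eval_proj12 (app : PApp A) (u b z : A) :
    Term.eval app (Term.op (.var 0) (.var 1) : Term 3) ![u, b, z] = app u b := by
  simp [Term.eval]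

lemma eval_tD (app : PApp A) (n b : A) :
    Term.eval app (Term.op (Term.op (.var 0) (.var 1)) (.var 1) : Term 2) ![n, b]
      = (app n b).bind fun c => app c b := by
  simp [Term.eval]

/- Definedness chains from realizers -/

lemma realizes2_def (Q : PCA B) {R : Set B} {t : Term (1 + 1)}
    (hreal : Realizes Q.app R t) {r : B} (hr : r ∈ R) (u : B) :
    (Q.app r u).isSome := by
  have h := (hreal r hr ![u, u]).1
  rwa [appVec_one_pre2] at h

lemma realizes4_chain (Q : PCA B) {R : Set B} {t : Term (3 + 1)}
    (hreal : Realizes Q.app R t) {r : B} (hr : r ∈ R) (u v w : B) :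
    ∃ s₁ s₂ s₃, Q.app r u = some s₁ ∧ Q.app s₁ v = some s₂ ∧ Q.app s₂ w = some s₃ := by
  have h := (hreal r hr ![u, v, w, w]).1
  rw [appVec_three_pre] at h
  obtain ⟨s₁, h1⟩ := Option.isSome_iff_exists.mp (isSome_bind_left (isSome_bind_left h))
  rw [h1] at h
  simp only [Option.bind_some] at h
  obtain ⟨s₂, h2⟩ := Option.isSome_iff_exists.mp (isSome_bind_left h)
  rw [h2] at h
  simp only [Option.bind_some] at h
  obtain ⟨s₃, h3⟩ := Option.isSome_iff_exists.mp h
  exact ⟨s₁, s₂, s₃, h1, h2, h3⟩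

end Stmt18
section DenseToAdjoint

variable {A B : Type} {P : PCA A} {Q : PCA B} {f : A → B → Prop} {M : Set B}

/-- The body of the computational-density condition, for a fixed `M`. -/
def DenseBody (P : PCA A) (Q : PCA B) (f : A → B → Prop) (M : Set B) : Prop :=
  ∀ U ∈ Q.filt, ∃ V ∈ P.filt,
    (∀ r ∈ V, ∀ a : A, (P.app r a).isSome) ∧
    (∀ r ∈ V, ∀ a a', P.app r a = some a' →
      (∀ u ∈ U, ∀ b, f a b → (Q.app u b).isSome) →
      ∀ m ∈ M, ∀ b', f a' b' →
        ∃ c, Q.app m b' = some c ∧ ∃ u ∈ U, ∃ b'', f a b'' ∧ Q.app u b'' = some c)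

/-- The realizability relation of the right adjoint on an assembly `Y`. -/
def Eprime (Q : PCA B) (f : A → B → Prop) (M : Set B) (Y : Asm Q)
    (y : Y.carrier) (a : A) : Prop :=
  ∀ m ∈ M, ∀ b, f a b → ∃ c, Q.app m b = some c ∧ Y.E y c

/-- The object part of the right adjoint. -/
def raObj (P : PCA A) (Q : PCA B) (f : A → B → Prop) (M : Set B) (Y : Asm Q) : Asm P where
  carrier := {y : Y.carrier // ∃ a, Eprime Q f M Y y a}
  E y a := Eprime Q f M Y y.1 a
  total y := y.2

lemma raMap_core (hM : M ∈ Q.filt) (hd : DenseBody P Q f M)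
    {Y Z : Asm Q} {k : Y.carrier → Z.carrier} {U : Set B} (hU : U ∈ Q.filt)
    (hk : Tracks Q (X := Y) (Y := Z) U k) :
    ∃ V ∈ P.filt, (∀ r ∈ V, ∀ a, (P.app r a).isSome) ∧
      ∀ y a, Eprime Q f M Y y a → ∀ r ∈ V, ∀ a', P.app r a = some a' →
        Eprime Q f M Z (k y) a' := by
  obtain ⟨S, hS, hSreal⟩ := Q.complete 2 (Term.op (.var 0) (Term.op (.var 1) (.var 2)))
  have hdef1 : SubDef Q.app S U := by
    intro s hs u _
    obtain ⟨x, y, h1, -⟩ := realizes3_chain Q hSreal hs u u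
    simp [h1]
  have hSU := Q.isFilter.appClosed S hS U hU hdef1
  have hdef2 : SubDef Q.app (SubApp Q.app S U) M := by
    rintro p ⟨s, hs, u, hu, hsu⟩ m _
    obtain ⟨x, y, h1, h2⟩ := realizes3_chain Q hSreal hs u m
    rw [hsu] at h1
    injection h1 with hh
    subst hh
    simp [h2]
  have hU' := Q.isFilter.appClosed _ hSU M hM hdef2
  obtain ⟨V, hV, hVtot, hVimp⟩ := hd _ hU'
  refine ⟨V, hV, hVtot, fun y a hya r hr a' hra' => ?_⟩
  have comp : ∀ u' ∈ SubApp Q.app (SubApp Q.app S U) M, ∀ b, f a b →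
      ∃ c, Q.app u' b = some c ∧ Z.E (k y) c := by
    rintro u' ⟨p, ⟨s, hs, u, hu, hsu⟩, m, hm, hpm⟩ b hab
    obtain ⟨c, hc, hYc⟩ := hya m hm b hab
    obtain ⟨c₂, hc₂, hZc₂⟩ := hk y c u hYc hu
    have heval : Term.eval Q.app
        (Term.op (.var 0) (Term.op (.var 1) (.var 2)) : Term 3) ![u, m, b] = some c₂ := by
      rw [eval_tS3, hc]
      simpa using hc₂
    have h2 := (hSreal s hs ![u, m, b]).2 c₂ heval
    rw [appVec_three_cons, hsu] at h2
    simp only [Option.bind_some] at h2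
    rw [hpm] at h2
    simp only [Option.bind_some] at h2
    exact ⟨c₂, h2, hZc₂⟩
  have hyp : ∀ u' ∈ SubApp Q.app (SubApp Q.app S U) M, ∀ b, f a b →
      (Q.app u' b).isSome := by
    intro u' hu' b hab
    obtain ⟨c, hc, -⟩ := comp u' hu' b hab
    simp [hc]
  intro m' hm' b' hb'
  obtain ⟨c, hc, u', hu', b'', hb'', hval⟩ := hVimp r hr a a' hra' hyp m' hm' b' hb'
  obtain ⟨c₂, hc₂, hZ⟩ := comp u' hu' b'' hb''
  rw [hval] at hc₂
  injection hc₂ with hh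
  subst hh
  exact ⟨c, hc, hZ⟩

lemma raMap_total (hM : M ∈ Q.filt) (hd : DenseBody P Q f M)
    {Y Z : Asm Q} (k : Y ⟶ Z) (y : (raObj P Q f M Y).carrier) :
    ∃ a, Eprime Q f M Z (k.1 y.1) a := by
  obtain ⟨U, hU, hk⟩ := k.2
  obtain ⟨V, hV, hVtot, hVimp⟩ := raMap_core hM hd hU hk
  obtain ⟨a, ha⟩ := y.2
  obtain ⟨r, hr⟩ := P.isFilter.nonempty V hV
  obtain ⟨a', ha'⟩ := Option.isSome_iff_exists.mp (hVtot r hr a)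
  exact ⟨a', hVimp y.1 a ha r hr a' ha'⟩

lemma raMap_tracked (hM : M ∈ Q.filt) (hd : DenseBody P Q f M)
    {Y Z : Asm Q} (k : Y ⟶ Z) :
    ∃ V ∈ P.filt, Tracks P (X := raObj P Q f M Y) (Y := raObj P Q f M Z) V
      (fun y => ⟨k.1 y.1, raMap_total hM hd k y⟩) := by
  obtain ⟨U, hU, hk⟩ := k.2
  obtain ⟨V, hV, hVtot, hVimp⟩ := raMap_core hM hd hU hk
  refine ⟨V, hV, fun y a r hya hr => ?_⟩
  obtain ⟨a', ha'⟩ := Option.isSome_iff_exists.mp (hVtot r hr a)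
  exact ⟨a', ha', hVimp y.1 a hya r hr a' ha'⟩

/-- The right adjoint functor induced by a computationally dense morphism. -/
def raFunctor (P : PCA A) (Q : PCA B) (f : A → B → Prop) (M : Set B)
    (hM : M ∈ Q.filt) (hd : DenseBody P Q f M) : Asm Q ⥤ Asm P where
  obj Y := raObj P Q f M Y
  map {Y Z} k := ⟨fun y => ⟨k.1 y.1, raMap_total hM hd k y⟩, raMap_tracked hM hd k⟩
  map_id Y := Subtype.ext (funext fun y => Subtype.ext rfl)
  map_comp k₁ k₂ := Subtype.ext (funext fun y => Subtype.ext rfl)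

lemma fwd_core (hf : IsAppMor P.app P.filt Q.app Q.filt f) (hd : DenseBody P Q f M)
    {X : Asm P} {Y : Asm Q} (g : (asmFunctor hf).obj X ⟶ Y) :
    ∃ V ∈ P.filt, ∀ x a, X.E x a → ∀ r ∈ V, ∃ a', P.app r a = some a' ∧
      Eprime Q f M Y (g.1 x) a' := by
  obtain ⟨U, hU, hg⟩ := g.2
  obtain ⟨V, hV, hVtot, hVimp⟩ := hd U hU
  refine ⟨V, hV, fun x a hxa r hr => ?_⟩
  obtain ⟨a', ha'⟩ := Option.isSome_iff_exists.mp (hVtot r hr a)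
  have hyp : ∀ u ∈ U, ∀ b, f a b → (Q.app u b).isSome := by
    intro u hu b hab
    obtain ⟨c, hc, -⟩ := hg x b u ⟨a, hxa, hab⟩ hu
    simp [hc]
  refine ⟨a', ha', fun m hm b' hb' => ?_⟩
  obtain ⟨c, hc, u, hu, b'', hb'', hval⟩ := hVimp r hr a a' ha' hyp m hm b' hb'
  obtain ⟨c₂, hc₂, hYc⟩ := hg x b'' u ⟨a, hxa, hb''⟩ hu
  rw [hval] at hc₂
  injection hc₂ with hh
  subst hh
  exact ⟨c, hc, hYc⟩

lemma fwd_total (hf : IsAppMor P.app P.filt Q.app Q.filt f) (hd : DenseBody P Q f M)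
    {X : Asm P} {Y : Asm Q} (g : (asmFunctor hf).obj X ⟶ Y) (x : X.carrier) :
    ∃ a, Eprime Q f M Y (g.1 x) a := by
  obtain ⟨V, hV, hcore⟩ := fwd_core hf hd g
  obtain ⟨a, hxa⟩ := X.total x
  obtain ⟨r, hr⟩ := P.isFilter.nonempty V hV
  obtain ⟨a', -, hE⟩ := hcore x a hxa r hr
  exact ⟨a', hE⟩

lemma fwd_tracked (hf : IsAppMor P.app P.filt Q.app Q.filt f) (hd : DenseBody P Q f M)
    {X : Asm P} {Y : Asm Q} (g : (asmFunctor hf).obj X ⟶ Y) :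
    ∃ V ∈ P.filt, Tracks P (X := X) (Y := raObj P Q f M Y) V
      (fun x => ⟨g.1 x, fwd_total hf hd g x⟩) := by
  obtain ⟨V, hV, hcore⟩ := fwd_core hf hd g
  exact ⟨V, hV, fun x a r hxa hr => hcore x a hxa r hr⟩

lemma bwd_tracked (hf : IsAppMor P.app P.filt Q.app Q.filt f) (hM : M ∈ Q.filt)
    {X : Asm P} {Y : Asm Q} (h : X ⟶ raObj P Q f M Y) :
    ∃ S ∈ Q.filt, Tracks Q (X := (asmFunctor hf).obj X) (Y := Y) S
      (fun x => (h.1 x).1) := by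
  obtain ⟨T, hT, hfT⟩ := hf.tracked
  obtain ⟨W, hW, hWtr⟩ := h.2
  obtain ⟨R, hR, hRreal⟩ := Q.complete 3
    (Term.op (.var 0) (Term.op (Term.op (.var 1) (.var 2)) (.var 3)))
  have hfW : relImage f W ∈ Q.filt := hf.image W hW
  have hdef1 : SubDef Q.app R M := by
    intro r hr m _
    obtain ⟨s₁, s₂, s₃, h1, -, -⟩ := realizes4_chain Q hRreal hr m m m
    simp [h1]
  have hRM := Q.isFilter.appClosed R hR M hM hdef1
  have hdef2 : SubDef Q.app (SubApp Q.app R M) T := by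
    rintro p ⟨r, hr, m, hm, hrm⟩ t _
    obtain ⟨s₁, s₂, s₃, h1, h2, -⟩ := realizes4_chain Q hRreal hr m t t
    rw [hrm] at h1
    injection h1 with hh
    subst hh
    simp [h2]
  have hRMT := Q.isFilter.appClosed _ hRM T hT hdef2
  have hdef3 : SubDef Q.app (SubApp Q.app (SubApp Q.app R M) T) (relImage f W) := by
    rintro p₂ ⟨p, ⟨r, hr, m, hm, hrm⟩, t, ht, hpt⟩ w' _
    obtain ⟨s₁, s₂, s₃, h1, h2, h3⟩ := realizes4_chain Q hRreal hr m t w'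
    rw [hrm] at h1
    injection h1 with hh
    subst hh
    rw [hpt] at h2
    injection h2 with hh
    subst hh
    simp [h3]
  refine ⟨_, Q.isFilter.appClosed _ hRMT _ hfW hdef3, ?_⟩
  rintro x b s ⟨a, hxa, hab⟩ ⟨p₂, ⟨p, ⟨r, hr, m, hm, hrm⟩, t, ht, hpt⟩, w', ⟨w, hw, hww'⟩, hs⟩
  obtain ⟨a'', ha'', hE'⟩ := hWtr x a w hxa hw
  obtain ⟨d, e, hde1, hde2, hfe⟩ := hfT w a a'' ha'' w' b hww' hab t ht
  obtain ⟨c, hc, hYc⟩ := hE' m hm e hfe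
  have heval : Term.eval Q.app
      (Term.op (.var 0) (Term.op (Term.op (.var 1) (.var 2)) (.var 3)) : Term 4)
      ![m, t, w', b] = some c := by
    rw [eval_tR4, hde1]
    simp only [Option.bind_some]
    rw [hde2]
    simpa using hc
  have h2 := (hRreal r hr ![m, t, w', b]).2 c heval
  rw [appVec_four_cons, hrm] at h2
  simp only [Option.bind_some] at h2
  rw [hpt] at h2
  simp only [Option.bind_some] at h2
  rw [hs] at h2
  simp only [Option.bind_some] at h2
  exact ⟨c, h2, hYc⟩

/-- The adjunction `Asm(f) ⊣ raFunctor`. -/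
def raAdjunction (hf : IsAppMor P.app P.filt Q.app Q.filt f)
    (hM : M ∈ Q.filt) (hd : DenseBody P Q f M) :
    asmFunctor hf ⊣ raFunctor P Q f M hM hd :=
  Adjunction.mkOfHomEquiv
    { homEquiv := fun X Y =>
        { toFun := fun g => ⟨fun x => ⟨g.1 x, fwd_total hf hd g x⟩, fwd_tracked hf hd g⟩
          invFun := fun h => ⟨fun x => (h.1 x).1, bwd_tracked hf hM h⟩
          left_inv := fun g => Subtype.ext rfl
          right_inv := fun h => Subtype.ext (funext fun x => Subtype.ext rfl) }
      homEquiv_naturality_left_symm := fun g h => Subtype.ext rfl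
      homEquiv_naturality_right := fun g k => Subtype.ext (funext fun x => Subtype.ext rfl) }

end DenseToAdjoint
section AdjointToDense

variable {A B : Type} {P : PCA A} {Q : PCA B} {f : A → B → Prop}

lemma dense_of_radj (hf : IsAppMor P.app P.filt Q.app Q.filt f)
    (G : Asm Q ⥤ Asm P) (adj : asmFunctor hf ⊣ G) : CompDense P Q f := by
  classical
  obtain ⟨b₀⟩ := Q.nonemptyCarrier
  -- the generic assembly of inhabited subsets of B
  set Ybar : Asm Q :=
    { carrier := {β : Set B // β.Nonempty}
      E := fun β c => c ∈ β.1
      total := fun β => β.2 } with hYbar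
  obtain ⟨D, hDmem, hDreal⟩ := Q.complete 1 (Term.op (Term.op (.var 0) (.var 1)) (.var 1))
  obtain ⟨N, hN, hNtr⟩ := (adj.counit.app Ybar).2
  have hdefDN : SubDef Q.app D N := fun d hd n _ => realizes2_def Q hDreal hd n
  refine ⟨SubApp Q.app D N, Q.isFilter.appClosed D hDmem N hN hdefDN, ?_⟩
  intro U hU
  obtain ⟨R, hRmem, hRreal⟩ := Q.complete 2 (Term.op (.var 0) (.var 1))
  set dom : Set A := {a | ∀ u ∈ U, ∀ b, f a b → (Q.app u b).isSome} with hdomdef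
  set Tset : A → Set B := fun a => {c | a ∈ dom → ∀ z, ∃ d', Q.app c z = some d' ∧
      ∃ u ∈ U, ∃ b, f a b ∧ Q.app u b = some d'} with hTsetdef
  have hTne : ∀ a, (Tset a).Nonempty := by
    intro a
    by_cases ha : a ∈ dom
    · obtain ⟨u, hu⟩ := Q.isFilter.nonempty U hU
      obtain ⟨b, hb⟩ := hf.total a
      obtain ⟨r, hr⟩ := Q.isFilter.nonempty R hRmem
      obtain ⟨s, c, hs, hc⟩ := realizes3_chain Q hRreal hr u b
      refine ⟨c, fun _ z => ?_⟩
      obtain ⟨d', hd'⟩ := Option.isSome_iff_exists.mp (ha u hu b hb)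
      have heval : Term.eval Q.app (Term.op (.var 0) (.var 1) : Term 3) ![u, b, z]
          = some d' := by rw [eval_proj12]; exact hd'
      have h2 := (hRreal r hr ![u, b, z]).2 d' heval
      rw [appVec_three_cons, hs] at h2
      simp only [Option.bind_some] at h2
      rw [hc] at h2
      simp only [Option.bind_some] at h2
      exact ⟨d', h2, u, hu, b, hb, hd'⟩
    · exact ⟨b₀, fun h => absurd h ha⟩
  set XU : Asm P := { carrier := A, E := fun x a => a = x, total := fun x => ⟨x, rfl⟩ }
    with hXU
  have gUtr : ∃ S ∈ Q.filt, Tracks Q (X := (asmFunctor hf).obj XU) (Y := Ybar) S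
      (fun a => (⟨Tset a, hTne a⟩ : Ybar.carrier)) := by
    have hdefRU : SubDef Q.app R U := by
      intro r hr u _
      obtain ⟨s, c, hs, -⟩ := realizes3_chain Q hRreal hr u u
      simp [hs]
    refine ⟨SubApp Q.app R U, Q.isFilter.appClosed R hRmem U hU hdefRU, ?_⟩
    rintro x b s ⟨a, hax, hab⟩ ⟨r, hr, u, hu, hru⟩
    cases hax
    obtain ⟨s₁, c, hs₁, hc⟩ := realizes3_chain Q hRreal hr u b
    rw [hru] at hs₁
    injection hs₁ with hh
    subst hh
    refine ⟨c, hc, ?_⟩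
    intro hxdom z
    obtain ⟨d', hd'⟩ := Option.isSome_iff_exists.mp (hxdom u hu b hab)
    have heval : Term.eval Q.app (Term.op (.var 0) (.var 1) : Term 3) ![u, b, z]
        = some d' := by rw [eval_proj12]; exact hd'
    have h2 := (hRreal r hr ![u, b, z]).2 d' heval
    rw [appVec_three_cons, hru] at h2
    simp only [Option.bind_some] at h2
    rw [hc] at h2
    simp only [Option.bind_some] at h2
    exact ⟨d', h2, u, hu, b, hab, hd'⟩
  set gU : (asmFunctor hf).obj XU ⟶ Ybar := ⟨fun a => ⟨Tset a, hTne a⟩, gUtr⟩ with hgUdef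
  set h := (adj.homEquiv XU Ybar) gU with hhdef
  obtain ⟨V, hV, hVtr⟩ := h.2
  have tri : (asmFunctor hf).map h ≫ adj.counit.app Ybar = gU := by
    have e := adj.homEquiv_counit (X := XU) (Y := Ybar) (g := h)
    rw [← e, hhdef, Equiv.symm_apply_apply]
  have tri' : ∀ a : A, ((adj.counit.app Ybar).1 (h.1 a)).1 = Tset a := by
    intro a
    have h0 := congrArg (fun (k : (asmFunctor hf).obj XU ⟶ Ybar) => k.1 a) tri
    exact congrArg Subtype.val h0
  refine ⟨V, hV, ?_, ?_⟩
  · intro r hr a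
    obtain ⟨a', ha', -⟩ := hVtr a a r rfl hr
    simp [ha']
  · intro r hr a a' hra hyp m hm b' hb'
    obtain ⟨a₂, ha₂, hGE⟩ := hVtr a a r rfl hr
    rw [hra] at ha₂
    injection ha₂ with hh₂
    subst hh₂
    obtain ⟨d, hd, n, hn, hdn⟩ := hm
    obtain ⟨c, hc, hYc⟩ := hNtr (h.1 a) b' n ⟨a', hGE, hb'⟩ hn
    have hYc' : c ∈ Tset a := by
      have := tri' a
      rw [← this]
      exact hYc
    obtain ⟨d', hd', hmem⟩ := hYc' hyp b'
    have heval : Term.eval Q.app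
        (Term.op (Term.op (.var 0) (.var 1)) (.var 1) : Term 2) ![n, b'] = some d' := by
      rw [eval_tD, hc]
      simpa using hd'
    have h2 := (hDreal d hd ![n, b']).2 d' heval
    rw [appVec_two_lit, hdn] at h2
    simp only [Option.bind_some] at h2
    exact ⟨d', h2, hmem⟩

end AdjointToDense

/-- For an applicative morphism `f : (A,φ) → (B,ψ)`, the induced functor
`Asm(f) : Asm(A,φ) ⥤ Asm(B,ψ)` has a right adjoint iff `f` is computationally dense. -/
theorem statement18 (A B : Type) (P : PCA A) (Q : PCA B) (f : A → B → Prop)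
    (hf : IsAppMor P.app P.filt Q.app Q.filt f) :
    (∃ G : Asm Q ⥤ Asm P, Nonempty (asmFunctor hf ⊣ G)) ↔ CompDense P Q f := by
  constructor
  · rintro ⟨G, ⟨adj⟩⟩
    exact dense_of_radj hf G adj
  · rintro ⟨M, hM, hd⟩
    exact ⟨raFunctor P Q f M hM hd, ⟨raAdjunction hf hM hd⟩⟩

end PcaPaper
end

section
/- Let (A,φ) be a PCA over Set. Then Asm(A,φ) is locally cartesian closed: for every morphism of assemblies g: I → J, the pullback functor g*: Asm(A,φ)/J → Asm(A,φ)/I between slice categories has a right adjoint. -/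
open CategoryTheory

namespace PcaPaper

variable {A B C : Type}

/- ### Auxiliary development for statement 19 -/

open Limits

/-- Pairing application: `p · a · b`. -/
abbrev mkPair (app : PApp A) (p a b : A) : Option A :=
  (app p a).bind fun s => app s b

lemma appVec_one_pre (app : PApp A) (r a b : A) :
    appVec app r 1 (fun i => (![a, b] : Fin 2 → A) i.castSucc) = app r a := rfl

lemma appVec_two_full (app : PApp A) (r a b : A) :
    appVec app r 2 ![a, b] = (app r a).bind fun s => app s b := rfl

/-- The pairing term `λ x y z. z x y`. -/
def tpair : Term 3 := .op (.op (.var 2) (.var 0)) (.var 1)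

lemma eval_tpair (app : PApp A) (a b z : A) :
    Term.eval app tpair ![a, b, z] = mkPair app z a b := by
  simp [tpair, Term.eval, mkPair]

lemma realizes2_def_s19 {P : PCA A} {U : Set A} {t : Term 2}
    (hreal : Realizes P.app U t) {r : A} (hr : r ∈ U) (a : A) :
    (P.app r a).isSome := by
  have h := (hreal r hr ![a, a]).1
  rwa [appVec_one_pre] at h

lemma realizes2_eval {P : PCA A} {U : Set A} {t : Term 2}
    (hreal : Realizes P.app U t) {r : A} (hr : r ∈ U) (a b w : A)
    (h : Term.eval P.app t ![a, b] = some w) :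
    ((P.app r a).bind fun s => P.app s b) = some w := by
  have h2 := (hreal r hr ![a, b]).2 w h
  rwa [appVec_two_full] at h2

/-- Bundled pairing/unpairing data for a PCA. -/
structure PairData (P : PCA A) where
  Pr : Set A
  Fs : Set A
  Sn : Set A
  hPr : Pr ∈ P.filt
  hFs : Fs ∈ P.filt
  hSn : Sn ∈ P.filt
  pair_def : ∀ p ∈ Pr, ∀ a b : A, ∃ c, mkPair P.app p a b = some c
  fst_eq : ∀ f ∈ Fs, ∀ p ∈ Pr, ∀ a b c : A, mkPair P.app p a b = some c →
    P.app f c = some a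
  snd_eq : ∀ f ∈ Sn, ∀ p ∈ Pr, ∀ a b c : A, mkPair P.app p a b = some c →
    P.app f c = some b

lemma pair_unpair {P : PCA A} {Pr : Set A} (hreal : Realizes P.app Pr tpair)
    {p : A} (hp : p ∈ Pr) {a b c : A} (hc : mkPair P.app p a b = some c)
    (z w : A) (hz : mkPair P.app z a b = some w) : P.app c z = some w := by
  have h2 := (hreal p hp ![a, b, z]).2 w (by rw [eval_tpair]; exact hz)
  rw [appVec_three_cons] at h2
  rw [show ((P.app p a).bind fun s => P.app s b) = some c from hc] at h2
  simpa using h2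

lemma pairData_nonempty (P : PCA A) : Nonempty (PairData P) := by
  obtain ⟨Pr, hPr, hPreal⟩ := P.complete 2 tpair
  obtain ⟨K, hK, hKreal⟩ := P.complete 1 (.var 0)
  obtain ⟨K', hK', hK'real⟩ := P.complete 1 (.var 1)
  obtain ⟨T, hT, hTreal⟩ := P.complete 1 (.op (.var 1) (.var 0))
  have pair_def : ∀ p ∈ Pr, ∀ a b : A, ∃ c, mkPair P.app p a b = some c := by
    intro p hp a b
    have h := (hPreal p hp ![a, b, b]).1
    rw [appVec_two_pre] at h
    exact Option.isSome_iff_exists.mp h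
  have hTdefK : SubDef P.app T K := fun t ht k _ => realizes2_def_s19 hTreal ht k
  have hTdefK' : SubDef P.app T K' := fun t ht k _ => realizes2_def_s19 hTreal ht k
  refine ⟨⟨Pr, SubApp P.app T K, SubApp P.app T K', hPr,
    P.isFilter.appClosed T hT K hK hTdefK,
    P.isFilter.appClosed T hT K' hK' hTdefK', pair_def, ?_, ?_⟩⟩
  · rintro f ⟨t, ht, k, hk, htk⟩ p hp a b c hc
    have hck : P.app c k = some a := by
      refine pair_unpair hPreal hp hc k a (realizes2_eval hKreal hk a b a ?_)
      simp [Term.eval]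
    have h := realizes2_eval hTreal ht k c a (by simp [Term.eval, hck])
    rw [htk] at h
    simpa using h
  · rintro f ⟨t, ht, k, hk, htk⟩ p hp a b c hc
    have hck : P.app c k = some b := by
      refine pair_unpair hPreal hp hc k b (realizes2_eval hK'real hk a b b ?_)
      simp [Term.eval]
    have h := realizes2_eval hTreal ht k c b (by simp [Term.eval, hck])
    rw [htk] at h
    simpa using h

lemma tracker_ap (P : PCA A) {U V : Set A} (hU : U ∈ P.filt) (hV : V ∈ P.filt) :
    ∃ W ∈ P.filt, ∀ w ∈ W, ∃ u ∈ U, ∃ v ∈ V, ∀ x y z : A,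
      P.app v x = some y → P.app u y = some z → P.app w x = some z := by
  obtain ⟨W, hW, h⟩ := exists_tracker3 P (.op (.var 0) (.op (.var 1) (.var 2))) hU hV
  refine ⟨W, hW, fun w hw => ?_⟩
  obtain ⟨u, hu, v, hv, key⟩ := h w hw
  exact ⟨u, hu, v, hv, fun x y z h1 h2 => key x z (by simp [Term.eval, h1, h2])⟩

lemma tracker_s (P : PCA A) {U V : Set A} (hU : U ∈ P.filt) (hV : V ∈ P.filt) :
    ∃ W ∈ P.filt, ∀ w ∈ W, ∃ u ∈ U, ∃ v ∈ V, ∀ x y z r : A,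
      P.app u x = some y → P.app v x = some z → P.app y z = some r →
        P.app w x = some r := by
  obtain ⟨W, hW, h⟩ := exists_tracker3 P
    (.op (.op (.var 0) (.var 2)) (.op (.var 1) (.var 2))) hU hV
  refine ⟨W, hW, fun w hw => ?_⟩
  obtain ⟨u, hu, v, hv, key⟩ := h w hw
  exact ⟨u, hu, v, hv, fun x y z r h1 h2 h3 =>
    key x r (by simp [Term.eval, h1, h2, h3])⟩

lemma exists_compE (P : PCA A) : ∃ T ∈ P.filt, ∀ t ∈ T, ∀ u q : A, ∃ e,
    ((P.app t u).bind fun s => P.app s q) = some e ∧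
    ∀ b y w : A, P.app q b = some y → P.app u y = some w →
      P.app e b = some w := by
  obtain ⟨T, hT, hreal⟩ := P.complete 2 (.op (.var 0) (.op (.var 1) (.var 2)))
  refine ⟨T, hT, fun t ht u q => ?_⟩
  have h1 := (hreal t ht ![u, q, q]).1
  rw [appVec_two_pre] at h1
  obtain ⟨e, he⟩ := Option.isSome_iff_exists.mp h1
  refine ⟨e, he, fun b y w hq hu => ?_⟩
  have h2 := (hreal t ht ![u, q, b]).2 w (by simp [Term.eval, hq, hu])
  rw [appVec_three_cons] at h2
  rw [show ((P.app t u).bind fun s => P.app s q) = some e from he] at h2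
  simpa using h2

lemma exists_compSet (P : PCA A) {U : Set A} (hU : U ∈ P.filt) :
    ∃ W ∈ P.filt, ∀ w ∈ W, ∃ u ∈ U, ∀ q : A, ∃ e, P.app w q = some e ∧
      ∀ b y z : A, P.app q b = some y → P.app u y = some z →
        P.app e b = some z := by
  obtain ⟨T, hT, hkey⟩ := exists_compE P
  have hdef : SubDef P.app T U := by
    intro t ht u _
    obtain ⟨e, he, -⟩ := hkey t ht u u
    have h2 : ((P.app t u).bind fun s => P.app s u).isSome := by
      rw [he]; rfl
    exact isSome_bind_left h2
  refine ⟨SubApp P.app T U, P.isFilter.appClosed T hT U hU hdef, ?_⟩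
  rintro w ⟨t, ht, u, hu, htu⟩
  refine ⟨u, hu, fun q => ?_⟩
  obtain ⟨e, he, key⟩ := hkey t ht u q
  rw [htu] at he
  simp only [Option.bind_some] at he
  exact ⟨e, he, key⟩

/- ### Explicit pullbacks of assemblies -/

variable {P : PCA A}

/-- Morphism constructor for assemblies. -/
def Asm.mkHom {X Y : Asm P} (f : X.carrier → Y.carrier)
    (h : ∃ U ∈ P.filt, Tracks P U f) : X ⟶ Y := ⟨f, h⟩

lemma Asm.hom_ext {X Y : Asm P} {f g : X ⟶ Y} (h : f.1 = g.1) : f = g :=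
  Subtype.ext h

/-- The explicit pullback assembly. -/
def pbAsm (D : PairData P) {X Y Z : Asm P} (f : X ⟶ Z) (g : Y ⟶ Z) : Asm P where
  carrier := {xy : X.carrier × Y.carrier // f.1 xy.1 = g.1 xy.2}
  E := fun s c => ∃ a b, X.E s.1.1 a ∧ Y.E s.1.2 b ∧
    ∃ p ∈ D.Pr, mkPair P.app p a b = some c
  total := fun s => by
    obtain ⟨a, ha⟩ := X.total s.1.1
    obtain ⟨b, hb⟩ := Y.total s.1.2
    obtain ⟨p, hp⟩ := P.isFilter.nonempty D.Pr D.hPr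
    obtain ⟨c, hc⟩ := D.pair_def p hp a b
    exact ⟨c, a, b, ha, hb, p, hp, hc⟩

/-- First projection from the explicit pullback. -/
def pbFst (D : PairData P) {X Y Z : Asm P} (f : X ⟶ Z) (g : Y ⟶ Z) :
    pbAsm D f g ⟶ X :=
  Asm.mkHom (fun s => s.1.1) ⟨D.Fs, D.hFs, fun s c r hE hr => by
    obtain ⟨a, b, ha, hb, p, hp, hc⟩ := hE
    exact ⟨a, D.fst_eq r hr p hp a b c hc, ha⟩⟩

/-- Second projection from the explicit pullback. -/
def pbSnd (D : PairData P) {X Y Z : Asm P} (f : X ⟶ Z) (g : Y ⟶ Z) :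
    pbAsm D f g ⟶ Y :=
  Asm.mkHom (fun s => s.1.2) ⟨D.Sn, D.hSn, fun s c r hE hr => by
    obtain ⟨a, b, ha, hb, p, hp, hc⟩ := hE
    exact ⟨b, D.snd_eq r hr p hp a b c hc, hb⟩⟩

lemma pbCond (D : PairData P) {X Y Z : Asm P} (f : X ⟶ Z) (g : Y ⟶ Z) :
    pbFst D f g ≫ f = pbSnd D f g ≫ g :=
  Asm.hom_ext (funext fun s => s.2)

/-- The explicit pullback cone is a limit cone. -/
def pbIsLimit (D : PairData P) {X Y Z : Asm P} (f : X ⟶ Z) (g : Y ⟶ Z) :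
    IsLimit (PullbackCone.mk (pbFst D f g) (pbSnd D f g) (pbCond D f g)) := by
  refine PullbackCone.IsLimit.mk _ (fun s => Asm.mkHom
    (fun w => ⟨(s.fst.1 w, s.snd.1 w), congrFun (congrArg Subtype.val s.condition) w⟩)
    ?_) (fun s => Asm.hom_ext rfl) (fun s => Asm.hom_ext rfl) ?_
  · obtain ⟨U, hU, hu⟩ := s.fst.2
    obtain ⟨V, hV, hv⟩ := s.snd.2
    obtain ⟨W1, hW1, hk1⟩ := tracker_ap P D.hPr hU
    obtain ⟨W2, hW2, hk2⟩ := tracker_s P hW1 hV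
    refine ⟨W2, hW2, fun w d r hw hr => ?_⟩
    obtain ⟨w1, h1, v, hvv, key2⟩ := hk2 r hr
    obtain ⟨p, hp, u, huu, key1⟩ := hk1 w1 h1
    obtain ⟨a, hua, ha⟩ := hu w d u hw huu
    obtain ⟨b, hvb, hb⟩ := hv w d v hw hvv
    obtain ⟨c, hc⟩ := D.pair_def p hp a b
    obtain ⟨y, hy, hyc⟩ := Option.bind_eq_some_iff.mp hc
    exact ⟨c, key2 d y b c (key1 d a y hua hy) hvb hyc, a, b, ha, hb, p, hp, hc⟩
  · intro s m h1 h2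
    refine Asm.hom_ext (funext fun w => Subtype.ext (Prod.ext ?_ ?_))
    · exact congrFun (congrArg Subtype.val h1) w
    · exact congrFun (congrArg Subtype.val h2) w

lemma hasPB (P : PCA A) : HasPullbacks (Asm P) := by
  obtain ⟨D⟩ := pairData_nonempty P
  haveI : ∀ {X Y Z : Asm P} {f : X ⟶ Z} {g : Y ⟶ Z}, HasLimit (cospan f g) :=
    fun {X Y Z f g} => HasLimit.mk ⟨_, pbIsLimit D f g⟩
  exact hasPullbacks_of_hasLimit_cospan (Asm P)

/- ### The explicit pullback functor along `g : I ⟶ J` -/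

/-- The explicit pullback functor `Over J ⥤ Over I`. -/
def pbFunctor (D : PairData P) {I J : Asm P} (g : I ⟶ J) : Over J ⥤ Over I where
  obj Y := Over.mk (pbSnd D Y.hom g)
  map {Y Y'} m := Over.homMk (Asm.mkHom
    (fun s => ⟨(m.left.1 s.1.1, s.1.2), by
      have h : Y'.hom.1 (m.left.1 s.1.1) = Y.hom.1 s.1.1 :=
        congrFun (congrArg Subtype.val (Over.w m)) s.1.1
      rw [h]; exact s.2⟩)
    (by
      obtain ⟨U, hU, hu⟩ := m.left.2
      obtain ⟨W1, hW1, hk1⟩ := tracker_ap P hU D.hFs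
      obtain ⟨W2, hW2, hk2⟩ := tracker_ap P D.hPr hW1
      obtain ⟨W, hW, hk⟩ := tracker_s P hW2 D.hSn
      refine ⟨W, hW, fun s c r hE hr => ?_⟩
      obtain ⟨a, b, ha, hb, p0, hp0, hc⟩ := hE
      obtain ⟨w2, hw2, sd, hsd, key⟩ := hk r hr
      obtain ⟨p, hp, w1, hw1, key2⟩ := hk2 w2 hw2
      obtain ⟨u, hu', f, hf, key1⟩ := hk1 w1 hw1
      obtain ⟨a', hua', ha'⟩ := hu s.1.1 a u ha hu'
      obtain ⟨c', hc'⟩ := D.pair_def p hp a' b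
      obtain ⟨y, hy, hyc⟩ := Option.bind_eq_some_iff.mp hc'
      exact ⟨c', key c y b c'
        (key2 c a' y (key1 c a a' (D.fst_eq f hf p0 hp0 a b c hc) hua') hy)
        (D.snd_eq sd hsd p0 hp0 a b c hc) hyc, a', b, ha', hb, p, hp, hc'⟩))
    (Asm.hom_ext rfl)
  map_id Y := Over.OverMorphism.ext (Asm.hom_ext rfl)
  map_comp m m' := Over.OverMorphism.ext (Asm.hom_ext rfl)

/- ### The dependent-product functor along `g : I ⟶ J` -/

/-- `e` uniformly tracks the section `s` of `X` over the fiber of `j`. -/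
def TrackedBy {I J : Asm P} (g : I ⟶ J) (X : Over I) (j : J.carrier)
    (s : ∀ i : I.carrier, g.1 i = j → X.left.carrier) (e : A) : Prop :=
  ∀ (i : I.carrier) (h : g.1 i = j) (b : A), I.E i b →
    ∃ d, P.app e b = some d ∧ X.left.E (s i h) d

/-- Carrier of the dependent product. -/
def piCar {I J : Asm P} (g : I ⟶ J) (X : Over I) : Type :=
  Σ j : J.carrier, {s : ∀ i : I.carrier, g.1 i = j → X.left.carrier //
    (∀ i h, X.hom.1 (s i h) = i) ∧ ∃ e, TrackedBy g X j s e}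

lemma piCar_ext {I J : Asm P} {g : I ⟶ J} {X : Over I} {σ τ : piCar g X}
    (h1 : σ.1 = τ.1)
    (h2 : ∀ i (h : g.1 i = σ.1) (h' : g.1 i = τ.1), σ.2.1 i h = τ.2.1 i h') :
    σ = τ := by
  obtain ⟨j, s⟩ := σ
  obtain ⟨j', s'⟩ := τ
  dsimp at h1
  subst h1
  exact congrArg (Sigma.mk j)
    (Subtype.ext (funext fun i => funext fun h => h2 i h h))

/-- The dependent-product assembly. -/
def piAsm (D : PairData P) {I J : Asm P} (g : I ⟶ J) (X : Over I) : Asm P where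
  carrier := piCar g X
  E := fun σ c => ∃ a e, J.E σ.1 a ∧ TrackedBy g X σ.1 σ.2.1 e ∧
    ∃ p ∈ D.Pr, mkPair P.app p a e = some c
  total := fun σ => by
    obtain ⟨a, ha⟩ := J.total σ.1
    obtain ⟨e, he⟩ := σ.2.2.2
    obtain ⟨p, hp⟩ := P.isFilter.nonempty D.Pr D.hPr
    obtain ⟨c, hc⟩ := D.pair_def p hp a e
    exact ⟨c, a, e, ha, he, p, hp, hc⟩

/-- The dependent product, as an object over `J`. -/
def piObj (D : PairData P) {I J : Asm P} (g : I ⟶ J) (X : Over I) : Over J :=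
  Over.mk (Y := piAsm D g X) (Asm.mkHom (fun σ => σ.1)
    ⟨D.Fs, D.hFs, fun σ c r hE hr => by
      obtain ⟨a, e, ha, -, p, hp, hc⟩ := hE
      exact ⟨a, D.fst_eq r hr p hp a e c hc, ha⟩⟩)

/-- Action of the dependent product on morphisms. -/
def piMapFn (D : PairData P) {I J : Asm P} (g : I ⟶ J) {X X' : Over I}
    (m : X ⟶ X') (σ : piCar g X) : piCar g X' := by
  refine ⟨σ.1, fun i h => m.left.1 (σ.2.1 i h), fun i h => ?_, ?_⟩
  · have hw : X'.hom.1 (m.left.1 (σ.2.1 i h)) = X.hom.1 (σ.2.1 i h) :=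
      congrFun (congrArg Subtype.val (Over.w m)) (σ.2.1 i h)
    rw [hw]; exact σ.2.2.1 i h
  · obtain ⟨e, he⟩ := σ.2.2.2
    obtain ⟨U, hU, hu⟩ := m.left.2
    obtain ⟨u, hu'⟩ := P.isFilter.nonempty U hU
    obtain ⟨T, hT, hTk⟩ := exists_compE P
    obtain ⟨t, ht⟩ := P.isFilter.nonempty T hT
    obtain ⟨e', -, ekey⟩ := hTk t ht u e
    refine ⟨e', fun i h b hb => ?_⟩
    obtain ⟨d, hd, hXd⟩ := he i h b hb
    obtain ⟨d', hd', hX'd⟩ := hu (σ.2.1 i h) d u hXd hu'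
    exact ⟨d', ekey b d d' hd hd', hX'd⟩

/-- The dependent-product functor `Over I ⥤ Over J`. -/
def piFunctor (D : PairData P) {I J : Asm P} (g : I ⟶ J) : Over I ⥤ Over J where
  obj X := piObj D g X
  map {X X'} m := Over.homMk (Asm.mkHom (piMapFn D g m)
    (by
      obtain ⟨U, hU, hu⟩ := m.left.2
      obtain ⟨TU, hTU, htu⟩ := exists_compSet P hU
      obtain ⟨W1, hW1, hk1⟩ := tracker_ap P D.hPr D.hFs
      obtain ⟨W2, hW2, hk2⟩ := tracker_ap P hTU D.hSn
      obtain ⟨W, hW, hk⟩ := tracker_s P hW1 hW2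
      refine ⟨W, hW, fun σ c r hE hr => ?_⟩
      obtain ⟨a, e, ha, hte, p0, hp0, hc⟩ := hE
      obtain ⟨w1, hw1, w2, hw2, key⟩ := hk r hr
      obtain ⟨p, hp, f, hf, key1⟩ := hk1 w1 hw1
      obtain ⟨tu, htum, sd, hsd, key2⟩ := hk2 w2 hw2
      obtain ⟨u, hu', hq⟩ := htu tu htum
      obtain ⟨e', he', ekey⟩ := hq e
      obtain ⟨c', hc'⟩ := D.pair_def p hp a e'
      obtain ⟨y, hy, hyc⟩ := Option.bind_eq_some_iff.mp hc'
      refine ⟨c', key c y e' c'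
        (key1 c a y (D.fst_eq f hf p0 hp0 a e c hc) hy)
        (key2 c e e' (D.snd_eq sd hsd p0 hp0 a e c hc) he') hyc,
        a, e', ha, ?_, p, hp, hc'⟩
      intro i h b hb
      obtain ⟨d, hd, hXd⟩ := hte i h b hb
      obtain ⟨d', hd', hX'd⟩ := hu (σ.2.1 i h) d u hXd hu'
      exact ⟨d', ekey b d d' hd hd', hX'd⟩))
    (Asm.hom_ext rfl)
  map_id X := Over.OverMorphism.ext (Asm.hom_ext rfl)
  map_comp m m' := Over.OverMorphism.ext (Asm.hom_ext rfl)

/- ### The adjunction between the explicit pullback and the dependent product -/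

/-- Transpose of `k : g* Y ⟶ X` to `Y ⟶ Π_g X`, on underlying elements. -/
def fwdFn (D : PairData P) {I J : Asm P} (g : I ⟶ J) {Y : Over J} {X : Over I}
    (k : (pbFunctor D g).obj Y ⟶ X) (y : Y.left.carrier) : piCar g X := by
  refine ⟨Y.hom.1 y, fun i h => k.left.1 ⟨(y, i), h.symm⟩, fun i h => ?_, ?_⟩
  · exact congrFun (congrArg Subtype.val (Over.w k)) ⟨(y, i), h.symm⟩
  · obtain ⟨a, ha⟩ := Y.left.total y
    obtain ⟨p, hp⟩ := P.isFilter.nonempty D.Pr D.hPr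
    obtain ⟨b0⟩ := P.nonemptyCarrier
    obtain ⟨c0, hc0⟩ := D.pair_def p hp a b0
    obtain ⟨q, hq, -⟩ := Option.bind_eq_some_iff.mp hc0
    obtain ⟨U, hU, hu⟩ := k.left.2
    obtain ⟨u, hu'⟩ := P.isFilter.nonempty U hU
    obtain ⟨T, hT, hTk⟩ := exists_compE P
    obtain ⟨t, ht⟩ := P.isFilter.nonempty T hT
    obtain ⟨e, -, ekey⟩ := hTk t ht u q
    refine ⟨e, fun i h b hb => ?_⟩
    obtain ⟨c, hc⟩ := D.pair_def p hp a b
    have hqb : P.app q b = some c := by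
      have := hc
      rw [mkPair, hq, Option.bind_some] at this
      exact this
    obtain ⟨d, hd, hXd⟩ := hu ⟨(y, i), h.symm⟩ c u ⟨a, b, ha, hb, p, hp, hc⟩ hu'
    exact ⟨d, ekey b c d hqb hd, hXd⟩

/-- Transpose `Y ⟶ Π_g X` as a morphism over `J`. -/
def fwd (D : PairData P) {I J : Asm P} (g : I ⟶ J) {Y : Over J} {X : Over I}
    (k : (pbFunctor D g).obj Y ⟶ X) : Y ⟶ piObj D g X := by
  refine Over.homMk (Asm.mkHom (fwdFn D g k) ?_) (Asm.hom_ext rfl)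
  obtain ⟨VJ, hVJ, hvj⟩ := Y.hom.2
  obtain ⟨U, hU, hu⟩ := k.left.2
  obtain ⟨TU, hTU, htu⟩ := exists_compSet P hU
  obtain ⟨W1, hW1, hk1⟩ := tracker_ap P D.hPr hVJ
  obtain ⟨W2, hW2, hk2⟩ := tracker_ap P hTU D.hPr
  obtain ⟨W, hW, hk⟩ := tracker_s P hW1 hW2
  refine ⟨W, hW, fun y a r hya hr => ?_⟩
  obtain ⟨w1, hw1, w2, hw2, key⟩ := hk r hr
  obtain ⟨pr, hpr, v, hv, key1⟩ := hk1 w1 hw1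
  obtain ⟨tu, htum, p, hp, key2⟩ := hk2 w2 hw2
  obtain ⟨u, hu', tuq⟩ := htu tu htum
  obtain ⟨a', hva', hJa'⟩ := hvj y a v hya hv
  obtain ⟨b0⟩ := P.nonemptyCarrier
  obtain ⟨c0, hc0⟩ := D.pair_def p hp a b0
  obtain ⟨q, hq, -⟩ := Option.bind_eq_some_iff.mp hc0
  obtain ⟨e, he, ekey⟩ := tuq q
  obtain ⟨c', hc'⟩ := D.pair_def pr hpr a' e
  obtain ⟨y0, hy0, hy0c⟩ := Option.bind_eq_some_iff.mp hc'
  refine ⟨c', key a y0 e c' (key1 a a' y0 hva' hy0) (key2 a q e hq he) hy0c,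
    a', e, hJa', ?_, pr, hpr, hc'⟩
  intro i h b hb
  obtain ⟨c, hc⟩ := D.pair_def p hp a b
  have hqb : P.app q b = some c := by
    have := hc
    rw [mkPair, hq, Option.bind_some] at this
    exact this
  obtain ⟨d, hd, hXd⟩ := hu ⟨(y, i), h.symm⟩ c u ⟨a, b, hya, hb, p, hp, hc⟩ hu'
  exact ⟨d, ekey b c d hqb hd, hXd⟩

/-- Transpose of `l : Y ⟶ Π_g X` to `g* Y ⟶ X`. -/
def bwd (D : PairData P) {I J : Asm P} (g : I ⟶ J) {Y : Over J} {X : Over I}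
    (l : Y ⟶ piObj D g X) : (pbFunctor D g).obj Y ⟶ X := by
  have hov : ∀ y, (l.left.1 y).1 = Y.hom.1 y := fun y =>
    congrFun (congrArg Subtype.val (Over.w l)) y
  refine Over.homMk (Asm.mkHom
    (fun s => (l.left.1 s.1.1).2.1 s.1.2 (by rw [hov]; exact s.2.symm)) ?_)
    (Asm.hom_ext (funext fun s => (l.left.1 s.1.1).2.2.1 s.1.2 _))
  obtain ⟨L, hL, hl⟩ := l.left.2
  obtain ⟨W1, hW1, hk1⟩ := tracker_ap P hL D.hFs
  obtain ⟨W2, hW2, hk2⟩ := tracker_ap P D.hSn hW1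
  obtain ⟨W, hW, hk⟩ := tracker_s P hW2 D.hSn
  refine ⟨W, hW, fun s c r hE hr => ?_⟩
  obtain ⟨a, b, ha, hb, p, hp, hc⟩ := hE
  obtain ⟨w2, hw2, sd, hsd, key⟩ := hk r hr
  obtain ⟨sd', hsd', w1, hw1, key2⟩ := hk2 w2 hw2
  obtain ⟨uL, huL, f, hf, key1⟩ := hk1 w1 hw1
  obtain ⟨c2, hc2, hEc2⟩ := hl s.1.1 a uL ha huL
  obtain ⟨a2, e2, hJ, htr, p2, hp2, hpair2⟩ := hEc2
  obtain ⟨d, hd, hXd⟩ := htr s.1.2 (by rw [hov]; exact s.2.symm) b hb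
  exact ⟨d, key c e2 b d
    (key2 c c2 e2 (key1 c a c2 (D.fst_eq f hf p hp a b c hc) hc2)
      (D.snd_eq sd' hsd' p2 hp2 a2 e2 c2 hpair2))
    (D.snd_eq sd hsd p hp a b c hc) hd, hXd⟩

/-- The adjunction between the explicit pullback and the dependent product. -/
def pbPiAdj (D : PairData P) {I J : Asm P} (g : I ⟶ J) :
    pbFunctor D g ⊣ piFunctor D g :=
  Adjunction.mkOfHomEquiv
    { homEquiv := fun Y X =>
        { toFun := fwd D g
          invFun := bwd D g
          left_inv := fun k => Over.OverMorphism.ext (Asm.hom_ext rfl)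
          right_inv := fun l => by
            have hov : ∀ y, (l.left.1 y).1 = Y.hom.1 y := fun y =>
              congrFun (congrArg Subtype.val (Over.w l)) y
            refine Over.OverMorphism.ext (Asm.hom_ext (funext fun y => ?_))
            exact piCar_ext (hov y).symm (fun i h h' => rfl) }
      homEquiv_naturality_left_symm := fun m l =>
        Over.OverMorphism.ext (Asm.hom_ext rfl)
      homEquiv_naturality_right := fun k m =>
        Over.OverMorphism.ext (Asm.hom_ext rfl) }

/-- `Asm(A,φ)` is locally cartesian closed: it has pullbacks, and for
every morphism of assemblies `g : I → J` the pullback functor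
`g* : Asm(A,φ)/J ⥤ Asm(A,φ)/I` has a right adjoint. -/
theorem statement19 (A : Type) (P : PCA A) :
    ∃ hpb : Limits.HasPullbacks (Asm P),
      ∀ (I J : Asm P) (g : I ⟶ J),
        ∃ R : Over I ⥤ Over J,
          Nonempty (@Over.pullback (Asm P) _ I J g (fun _ => by haveI := hpb; infer_instance) ⊣ R) := by
  obtain ⟨D⟩ := pairData_nonempty P
  have hpb : Limits.HasPullbacks (Asm P) := hasPB P
  haveI := hpb
  refine ⟨hpb, fun I J g => ⟨piFunctor D g, ⟨Adjunction.ofNatIsoLeft (pbPiAdj D g) ?_⟩⟩⟩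
  have hfst : ∀ Z : Over J,
      (limit.isoLimitCone ⟨_, pbIsLimit D Z.hom g⟩).inv ≫ pullback.fst Z.hom g =
        pbFst D Z.hom g := fun Z => by
    simpa using limit.isoLimitCone_inv_π ⟨_, pbIsLimit D Z.hom g⟩ WalkingCospan.left
  have hsnd : ∀ Z : Over J,
      (limit.isoLimitCone ⟨_, pbIsLimit D Z.hom g⟩).inv ≫ pullback.snd Z.hom g =
        pbSnd D Z.hom g := fun Z => by
    simpa using limit.isoLimitCone_inv_π ⟨_, pbIsLimit D Z.hom g⟩ WalkingCospan.right
  refine NatIso.ofComponents (fun Y => Over.isoMk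
    (limit.isoLimitCone ⟨_, pbIsLimit D Y.hom g⟩).symm (hsnd Y)) ?_
  intro Y Y' m
  apply Over.OverMorphism.ext
  simp only [Over.comp_left, Over.isoMk_hom_left, Over.pullback_map_left,
    Over.homMk_left, Iso.symm_hom]
  apply pullback.hom_ext
  · rw [Category.assoc, Category.assoc, pullback.lift_fst]
    erw [hfst Y', ← Category.assoc, hfst Y]
    exact Asm.hom_ext rfl
  · rw [Category.assoc, Category.assoc, pullback.lift_snd]
    erw [hsnd Y', hsnd Y]
    exact Asm.hom_ext rfl

end PcaPaper
end
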